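/- For each fixed integer k ≥ 1, the function α ↦ Γ(1+α)/(Γ(1+α/2)Γ(k+1+α/2)) is strictly decreasing on (-1, 0.8). -/

import Mathlib

open Real Filter

private lemma sum71' : 2 * Real.log 2 <
    ∑ j ∈ Finset.range 71, (1/(9/10 + (j:ℝ)) - 1/(24/10 + (j:ℝ))) := by
  have h2 : Real.log 2 < 0.6931471808 := Real.log_two_lt_d9
  have : (∑ j ∈ Finset.range 71, (1/(9/10 + (j:ℝ)) - 1/(24/10 + (j:ℝ)))) ≥ 1.3862943617 := by
    norm_num [Finset.sum_range_succ]
  nlinarith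

private lemma term_bound' {u v : ℝ} (hu : 0 < u) (huv : u < v) (hv : v ≤ 9/10) (j : ℕ) :
    Real.exp ((v - u) * (1/(9/10 + (j:ℝ)) - 1/(24/10 + (j:ℝ)))) * ((u + j) * (v + 3/2 + j))
      ≤ (v + j) * (u + 3/2 + j) := by
  set φ : ℝ → ℝ := fun t => Real.log (t + j) - Real.log (t + j + 3/2) with hφ
  have hpos : ∀ t : ℝ, u ≤ t → (0 < t + j ∧ 0 < t + j + 3/2) := by
    intro t ht
    constructor <;> nlinarith [Nat.cast_nonneg (α := ℝ) j]
  have hderiv : ∀ t ∈ Set.Ioo u v, HasDerivAt φ (1/(t + j) - 1/(t + j + 3/2)) t := by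
    intro t ht
    obtain ⟨h1, h2⟩ := hpos t ht.1.le
    have d1 : HasDerivAt (fun t : ℝ => Real.log (t + j)) (1/(t + j)) t := by
      simpa using (((hasDerivAt_id t).add_const (j : ℝ)).log h1.ne')
    have d2 : HasDerivAt (fun t : ℝ => Real.log (t + j + 3/2)) (1/(t + j + 3/2)) t := by
      simpa using ((((hasDerivAt_id t).add_const (j : ℝ)).add_const (3/2 : ℝ)).log h2.ne')
    exact d1.sub d2
  have hcont : ContinuousOn φ (Set.Icc u v) := by
    apply ContinuousOn.sub
    · exact (continuousOn_id.add continuousOn_const).log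
        (fun t ht => (hpos t ht.1).1.ne')
    · exact ((continuousOn_id.add continuousOn_const).add continuousOn_const).log
        (fun t ht => (hpos t ht.1).2.ne')
  obtain ⟨c, hc, hslope⟩ := exists_hasDerivAt_eq_slope φ _ huv hcont hderiv
  obtain ⟨hc1, hc2⟩ := hpos c hc.1.le
  have hcb : 1/(9/10 + (j:ℝ)) - 1/(24/10 + (j:ℝ)) ≤ 1/(c + j) - 1/(c + j + 3/2) := by
    have e1 : 1/(c + (j:ℝ)) - 1/(c + j + 3/2) = (3/2) / ((c + j) * (c + j + 3/2)) := by
      field_simp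
      ring
    have e2 : 1/(9/10 + (j:ℝ)) - 1/(24/10 + (j:ℝ))
        = (3/2) / ((9/10 + (j:ℝ)) * (24/10 + (j:ℝ))) := by
      have h1 : (0:ℝ) < 9/10 + (j:ℝ) := by positivity
      have h2 : (0:ℝ) < 24/10 + (j:ℝ) := by positivity
      field_simp
      ring
    rw [e1, e2]
    have hcv : c ≤ 9/10 := le_trans hc.2.le hv
    have hj := Nat.cast_nonneg (α := ℝ) j
    rw [div_le_div_iff₀ (by positivity) (by positivity)]
    nlinarith
  have hlog : (v - u) * (1/(9/10 + (j:ℝ)) - 1/(24/10 + (j:ℝ))) ≤ φ v - φ u := by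
    have hvu : 0 < v - u := by linarith
    calc (v - u) * (1/(9/10 + (j:ℝ)) - 1/(24/10 + (j:ℝ)))
        ≤ (v - u) * (1/(c + j) - 1/(c + j + 3/2)) :=
          mul_le_mul_of_nonneg_left hcb hvu.le
      _ = φ v - φ u := by rw [hslope]; field_simp
  obtain ⟨hu1, hu2⟩ := hpos u le_rfl
  obtain ⟨hv1, hv2⟩ := hpos v huv.le
  have := Real.exp_le_exp.2 hlog
  rw [hφ] at this
  have hexp : Real.exp (Real.log (v + j) - Real.log (v + j + 3/2)
        - (Real.log (u + j) - Real.log (u + j + 3/2)))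
      = ((v + j) * (u + j + 3/2)) / ((u + j) * (v + j + 3/2)) := by
    rw [show Real.log (v + (j:ℝ)) - Real.log (v + j + 3/2)
          - (Real.log (u + j) - Real.log (u + j + 3/2))
        = (Real.log (v + j) + Real.log (u + j + 3/2))
          - (Real.log (u + j) + Real.log (v + j + 3/2)) by ring,
      ← Real.log_mul hv1.ne' hu2.ne', ← Real.log_mul hu1.ne' hv2.ne',
      Real.exp_sub, Real.exp_log (by positivity), Real.exp_log (by positivity)]
  rw [hexp, le_div_iff₀ (by positivity)] at this
  nlinarith [this]

private lemma prod_key' {u v : ℝ} (hu : 0 < u) (huv : u < v) (hv : v ≤ 9/10) {n : ℕ}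
    (hn : 71 ≤ n) :
    Real.exp ((v - u) * ∑ j ∈ Finset.range 71, (1/(9/10 + (j:ℝ)) - 1/(24/10 + (j:ℝ))))
      * ∏ j ∈ Finset.range (n+1), ((u + (j:ℝ)) * (v + 3/2 + (j:ℝ)))
    ≤ ∏ j ∈ Finset.range (n+1), ((v + (j:ℝ)) * (u + 3/2 + (j:ℝ))) := by
  have hsplit : ∀ w z : ℝ, (∏ j ∈ Finset.range (n+1), ((w + (j:ℝ)) * (z + 3/2 + (j:ℝ)))) =
      (∏ j ∈ Finset.range 71, ((w + (j:ℝ)) * (z + 3/2 + (j:ℝ))))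
        * ∏ j ∈ Finset.Ico 71 (n+1), ((w + (j:ℝ)) * (z + 3/2 + (j:ℝ))) := by
    intro w z
    rw [Finset.range_eq_Ico]
    exact (Finset.prod_Ico_consecutive _ (Nat.zero_le 71) (by omega : 71 ≤ n + 1)).symm
  rw [hsplit u v, hsplit v u]
  have hfac : ∀ (w : ℝ), 0 < w → ∀ j : ℕ, (0:ℝ) < w + (j:ℝ) := by
    intro w hw j
    have := Nat.cast_nonneg (α := ℝ) j
    linarith
  have h1 : Real.exp ((v - u) * ∑ j ∈ Finset.range 71, (1/(9/10 + (j:ℝ)) - 1/(24/10 + (j:ℝ))))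
      * ∏ j ∈ Finset.range 71, ((u + (j:ℝ)) * (v + 3/2 + (j:ℝ)))
      ≤ ∏ j ∈ Finset.range 71, ((v + (j:ℝ)) * (u + 3/2 + (j:ℝ))) := by
    rw [Finset.mul_sum, Real.exp_sum, ← Finset.prod_mul_distrib]
    apply Finset.prod_le_prod
    · intro j _
      have := hfac u hu j
      have := hfac (v + 3/2) (by linarith) j
      positivity
    · intro j _
      exact term_bound' hu huv hv j
  have h2 : (∏ j ∈ Finset.Ico 71 (n+1), ((u + (j:ℝ)) * (v + 3/2 + (j:ℝ))))
      ≤ ∏ j ∈ Finset.Ico 71 (n+1), ((v + (j:ℝ)) * (u + 3/2 + (j:ℝ))) := by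
    apply Finset.prod_le_prod
    · intro j _
      have := hfac u hu j
      have := hfac (v + 3/2) (by linarith) j
      positivity
    · intro j _
      have := Nat.cast_nonneg (α := ℝ) j
      nlinarith
  have hA2 : (0:ℝ) ≤ ∏ j ∈ Finset.Ico 71 (n+1), ((u + (j:ℝ)) * (v + 3/2 + (j:ℝ))) := by
    apply Finset.prod_nonneg
    intro j _
    have := hfac u hu j
    have := hfac (v + 3/2) (by linarith) j
    positivity
  have hB1 : (0:ℝ) ≤ ∏ j ∈ Finset.range 71, ((v + (j:ℝ)) * (u + 3/2 + (j:ℝ))) := by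
    apply Finset.prod_nonneg
    intro j _
    have := hfac v (hu.trans huv) j
    have := hfac (u + 3/2) (by linarith) j
    positivity
  calc Real.exp ((v - u) * ∑ j ∈ Finset.range 71, (1/(9/10 + (j:ℝ)) - 1/(24/10 + (j:ℝ))))
      * ((∏ j ∈ Finset.range 71, ((u + (j:ℝ)) * (v + 3/2 + (j:ℝ))))
        * ∏ j ∈ Finset.Ico 71 (n+1), ((u + (j:ℝ)) * (v + 3/2 + (j:ℝ))))
      = (Real.exp ((v - u) * ∑ j ∈ Finset.range 71, (1/(9/10 + (j:ℝ)) - 1/(24/10 + (j:ℝ))))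
        * ∏ j ∈ Finset.range 71, ((u + (j:ℝ)) * (v + 3/2 + (j:ℝ))))
        * ∏ j ∈ Finset.Ico 71 (n+1), ((u + (j:ℝ)) * (v + 3/2 + (j:ℝ))) := by ring
    _ ≤ (∏ j ∈ Finset.range 71, ((v + (j:ℝ)) * (u + 3/2 + (j:ℝ))))
        * ∏ j ∈ Finset.Ico 71 (n+1), ((v + (j:ℝ)) * (u + 3/2 + (j:ℝ))) :=
      mul_le_mul h1 h2 hA2 hB1

private lemma core' {u v : ℝ} (hu : 0 < u) (huv : u < v) (hv : v ≤ 9/10) :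
    Real.Gamma v * (2:ℝ) ^ (2*v) * Real.Gamma (u + 3/2)
      < Real.Gamma u * (2:ℝ) ^ (2*u) * Real.Gamma (v + 3/2) := by
  set S : ℝ := ∑ j ∈ Finset.range 71, (1/(9/10 + (j:ℝ)) - 1/(24/10 + (j:ℝ))) with hSdef
  have hS : 2 * Real.log 2 < S := sum71'
  set K : ℝ := Real.exp ((v - u) * (S - 2 * Real.log 2)) with hKdef
  have hK : 1 < K := by
    rw [hKdef, ← Real.exp_zero]
    apply Real.exp_lt_exp.2
    nlinarith
  have hΓv : 0 < Real.Gamma v := Real.Gamma_pos_of_pos (hu.trans huv)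
  have hΓu32 : 0 < Real.Gamma (u + 3/2) := Real.Gamma_pos_of_pos (by linarith)
  have hfac : ∀ (w : ℝ), 0 < w → ∀ j : ℕ, (0:ℝ) < w + (j:ℝ) := by
    intro w hw j
    have := Nat.cast_nonneg (α := ℝ) j
    linarith
  have main : K * ((2:ℝ) ^ (2*v) * (Real.Gamma v * Real.Gamma (u + 3/2)))
      ≤ (2:ℝ) ^ (2*u) * (Real.Gamma u * Real.Gamma (v + 3/2)) := by
    have hBlim : Tendsto (fun n => K * ((2:ℝ) ^ (2*v)
          * (Real.GammaSeq v n * Real.GammaSeq (u + 3/2) n))) atTop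
        (nhds (K * ((2:ℝ) ^ (2*v) * (Real.Gamma v * Real.Gamma (u + 3/2))))) :=
      tendsto_const_nhds.mul (tendsto_const_nhds.mul
        ((Real.GammaSeq_tendsto_Gamma v).mul (Real.GammaSeq_tendsto_Gamma _)))
    have hAlim : Tendsto (fun n => (2:ℝ) ^ (2*u)
          * (Real.GammaSeq u n * Real.GammaSeq (v + 3/2) n)) atTop
        (nhds ((2:ℝ) ^ (2*u) * (Real.Gamma u * Real.Gamma (v + 3/2)))) :=
      tendsto_const_nhds.mul
        ((Real.GammaSeq_tendsto_Gamma u).mul (Real.GammaSeq_tendsto_Gamma _))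
    refine le_of_tendsto_of_tendsto hBlim hAlim ?_
    rw [Filter.EventuallyLE, Filter.eventually_atTop]
    refine ⟨71, fun n hn => ?_⟩
    have hn0 : (0:ℝ) < (n:ℝ) := by
      have : (0:ℕ) < n := by omega
      exact_mod_cast this
    have hfact : (0:ℝ) < (n.factorial : ℝ) := by exact_mod_cast n.factorial_pos
    have hPu : 0 < ∏ j ∈ Finset.range (n+1), (u + (j:ℝ)) :=
      Finset.prod_pos fun j _ => hfac u hu j
    have hPv : 0 < ∏ j ∈ Finset.range (n+1), (v + (j:ℝ)) :=
      Finset.prod_pos fun j _ => hfac v (hu.trans huv) j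
    have hPu32 : 0 < ∏ j ∈ Finset.range (n+1), (u + 3/2 + (j:ℝ)) :=
      Finset.prod_pos fun j _ => hfac (u + 3/2) (by linarith) j
    have hPv32 : 0 < ∏ j ∈ Finset.range (n+1), (v + 3/2 + (j:ℝ)) :=
      Finset.prod_pos fun j _ => hfac (v + 3/2) (by linarith) j
    have key : Real.exp ((v - u) * S)
        * ((∏ j ∈ Finset.range (n+1), (u + (j:ℝ)))
          * ∏ j ∈ Finset.range (n+1), (v + 3/2 + (j:ℝ)))
        ≤ (∏ j ∈ Finset.range (n+1), (v + (j:ℝ)))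
          * ∏ j ∈ Finset.range (n+1), (u + 3/2 + (j:ℝ)) := by
      have h := prod_key' hu huv hv hn
      rwa [Finset.prod_mul_distrib, Finset.prod_mul_distrib] at h
    have hnpow : (n:ℝ) ^ v * (n:ℝ) ^ (u + 3/2) = (n:ℝ) ^ u * (n:ℝ) ^ (v + 3/2) := by
      rw [← Real.rpow_add hn0, ← Real.rpow_add hn0]
      ring_nf
    have hKexp : K * (2:ℝ) ^ (2*v) = (2:ℝ) ^ (2*u) * Real.exp ((v - u) * S) := by
      rw [Real.rpow_def_of_pos two_pos, Real.rpow_def_of_pos two_pos, hKdef,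
        ← Real.exp_add, ← Real.exp_add]
      ring_nf
    simp only [Real.GammaSeq]
    have eL : K * ((2:ℝ) ^ (2*v) * (((n:ℝ) ^ v * (n.factorial : ℝ) / ∏ j ∈ Finset.range (n+1), (v + (j:ℝ)))
          * ((n:ℝ) ^ (u + 3/2) * (n.factorial : ℝ) / ∏ j ∈ Finset.range (n+1), (u + 3/2 + (j:ℝ)))))
        = K * ((2:ℝ) ^ (2*v) * ((n:ℝ) ^ v * (n.factorial : ℝ) * ((n:ℝ) ^ (u + 3/2) * (n.factorial : ℝ))))
          / ((∏ j ∈ Finset.range (n+1), (v + (j:ℝ))) * ∏ j ∈ Finset.range (n+1), (u + 3/2 + (j:ℝ))) := by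
      ring
    have eR : (2:ℝ) ^ (2*u) * (((n:ℝ) ^ u * (n.factorial : ℝ) / ∏ j ∈ Finset.range (n+1), (u + (j:ℝ)))
          * ((n:ℝ) ^ (v + 3/2) * (n.factorial : ℝ) / ∏ j ∈ Finset.range (n+1), (v + 3/2 + (j:ℝ))))
        = (2:ℝ) ^ (2*u) * ((n:ℝ) ^ u * (n.factorial : ℝ) * ((n:ℝ) ^ (v + 3/2) * (n.factorial : ℝ)))
          / ((∏ j ∈ Finset.range (n+1), (u + (j:ℝ))) * ∏ j ∈ Finset.range (n+1), (v + 3/2 + (j:ℝ))) := by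
      ring
    rw [eL, eR, div_le_div_iff₀ (by positivity) (by positivity)]
    have hcomb : K * (2:ℝ) ^ (2*v) * ((n:ℝ) ^ v * (n:ℝ) ^ (u + 3/2))
        = (2:ℝ) ^ (2*u) * ((n:ℝ) ^ u * (n:ℝ) ^ (v + 3/2)) * Real.exp ((v - u) * S) := by
      rw [hKexp, hnpow]; ring
    calc K * ((2:ℝ) ^ (2*v) * ((n:ℝ) ^ v * (n.factorial : ℝ) * ((n:ℝ) ^ (u + 3/2) * (n.factorial : ℝ))))
          * ((∏ j ∈ Finset.range (n+1), (u + (j:ℝ)))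
            * ∏ j ∈ Finset.range (n+1), (v + 3/2 + (j:ℝ)))
        = ((2:ℝ) ^ (2*u) * ((n:ℝ) ^ u * (n:ℝ) ^ (v + 3/2)) * (n.factorial : ℝ) * (n.factorial : ℝ))
          * (Real.exp ((v - u) * S)
            * ((∏ j ∈ Finset.range (n+1), (u + (j:ℝ)))
              * ∏ j ∈ Finset.range (n+1), (v + 3/2 + (j:ℝ)))) := by
          linear_combination ((n.factorial : ℝ) * (n.factorial : ℝ)
            * ((∏ j ∈ Finset.range (n+1), (u + (j:ℝ)))
              * ∏ j ∈ Finset.range (n+1), (v + 3/2 + (j:ℝ)))) * hcomb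
      _ ≤ ((2:ℝ) ^ (2*u) * ((n:ℝ) ^ u * (n:ℝ) ^ (v + 3/2)) * (n.factorial : ℝ) * (n.factorial : ℝ))
          * ((∏ j ∈ Finset.range (n+1), (v + (j:ℝ)))
            * ∏ j ∈ Finset.range (n+1), (u + 3/2 + (j:ℝ))) := by
          apply mul_le_mul_of_nonneg_left key
          positivity
      _ = (2:ℝ) ^ (2*u) * ((n:ℝ) ^ u * (n.factorial : ℝ) * ((n:ℝ) ^ (v + 3/2) * (n.factorial : ℝ)))
          * ((∏ j ∈ Finset.range (n+1), (v + (j:ℝ)))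
            * ∏ j ∈ Finset.range (n+1), (u + 3/2 + (j:ℝ))) := by ring
  have hpos : 0 < Real.Gamma v * (2:ℝ) ^ (2*v) * Real.Gamma (u + 3/2) :=
    mul_pos (mul_pos hΓv (Real.rpow_pos_of_pos two_pos (2*v))) hΓu32
  calc Real.Gamma v * (2:ℝ) ^ (2*v) * Real.Gamma (u + 3/2)
      < K * (Real.Gamma v * (2:ℝ) ^ (2*v) * Real.Gamma (u + 3/2)) :=
        (lt_mul_iff_one_lt_left hpos).2 hK
    _ = K * ((2:ℝ) ^ (2*v) * (Real.Gamma v * Real.Gamma (u + 3/2))) := by ring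
    _ ≤ (2:ℝ) ^ (2*u) * (Real.Gamma u * Real.Gamma (v + 3/2)) := main
    _ = Real.Gamma u * (2:ℝ) ^ (2*u) * Real.Gamma (v + 3/2) := by ring

private lemma gamma_eval {t : ℝ} (ht : -1 < t) :
    Real.Gamma (1 + t) / (Real.Gamma (1 + t/2) * Real.Gamma (2 + t/2))
      = Real.Gamma ((1+t)/2) * (2:ℝ) ^ (2*((1+t)/2))
        / (2 * Real.sqrt π * Real.Gamma ((1+t)/2 + 3/2)) := by
  set s : ℝ := (1+t)/2 with hsdef
  have hs : 0 < s := by rw [hsdef]; linarith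
  have hdup := Real.Gamma_mul_Gamma_add_half s
  have h2s : 2 * s = 1 + t := by rw [hsdef]; ring
  have hpow : (2:ℝ) ^ (1 - 2*s) = 2 / (2:ℝ) ^ (2*s) := by
    rw [Real.rpow_sub two_pos, Real.rpow_one]
  have hΓs12 : 0 < Real.Gamma (s + 1/2) := Real.Gamma_pos_of_pos (by linarith)
  have hΓs32 : 0 < Real.Gamma (s + 3/2) := Real.Gamma_pos_of_pos (by linarith)
  have hΓs : 0 < Real.Gamma s := Real.Gamma_pos_of_pos hs
  have hsqrt : 0 < Real.sqrt π := Real.sqrt_pos.2 Real.pi_pos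
  have hp : 0 < (2:ℝ) ^ (2*s) := Real.rpow_pos_of_pos two_pos _
  have hΓ1t : Real.Gamma (1 + t) = Real.Gamma s * Real.Gamma (s + 1/2) * (2:ℝ) ^ (2*s)
      / (2 * Real.sqrt π) := by
    rw [h2s] at hdup
    have hpow' : (2:ℝ) ^ ((1:ℝ) - (1+t)) = 2 / (2:ℝ) ^ (2*s) := by
      rw [show (1:ℝ) - (1+t) = 1 - 2*s by rw [h2s], Real.rpow_sub two_pos, Real.rpow_one]
    rw [hpow'] at hdup
    field_simp at hdup ⊢
    linarith [hdup]
  have e1 : 1 + t/2 = s + 1/2 := by rw [hsdef]; ring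
  have e2 : 2 + t/2 = s + 3/2 := by rw [hsdef]; ring
  rw [hΓ1t, e1, e2]
  field_simp

private lemma base_anti :
    StrictAntiOn (fun α : ℝ => Real.Gamma (1 + α) /
      (Real.Gamma (1 + α / 2) * Real.Gamma (1 + 1 + α / 2))) (Set.Ioo (-1 : ℝ) 0.8) := by
  intro x hx y hy hxy
  obtain ⟨hx1, hx2⟩ := hx
  obtain ⟨hy1, hy2⟩ := hy
  have hx2' : x < 4/5 := by norm_num at hx2; linarith
  have hy2' : y < 4/5 := by norm_num at hy2; linarith
  simp only []
  have e : ∀ α : ℝ, (1:ℝ) + 1 + α/2 = 2 + α/2 := fun α => by ring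
  rw [e, e, gamma_eval hx1, gamma_eval hy1]
  set u : ℝ := (1+x)/2 with hudef
  set v : ℝ := (1+y)/2 with hvdef
  have hu : 0 < u := by rw [hudef]; linarith
  have huv : u < v := by rw [hudef, hvdef]; linarith
  have hv : v ≤ 9/10 := by rw [hvdef]; linarith
  have hcore := core' hu huv hv
  have hΓu : 0 < Real.Gamma u := Real.Gamma_pos_of_pos hu
  have hΓv : 0 < Real.Gamma v := Real.Gamma_pos_of_pos (hu.trans huv)
  have hΓu32 : 0 < Real.Gamma (u + 3/2) := Real.Gamma_pos_of_pos (by linarith)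
  have hΓv32 : 0 < Real.Gamma (v + 3/2) := Real.Gamma_pos_of_pos (by linarith)
  have hsqrt : 0 < Real.sqrt π := Real.sqrt_pos.2 Real.pi_pos
  have hpu : 0 < (2:ℝ) ^ (2*u) := Real.rpow_pos_of_pos two_pos _
  have hpv : 0 < (2:ℝ) ^ (2*v) := Real.rpow_pos_of_pos two_pos _
  rw [div_lt_div_iff₀ (by positivity) (by positivity)]
  nlinarith [mul_lt_mul_of_pos_left hcore (mul_pos two_pos hsqrt)]

theorem stmt_18 (k : ℕ) (hk : 1 ≤ k) :
    StrictAntiOn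
      (fun α : ℝ => Real.Gamma (1 + α) /
        (Real.Gamma (1 + α / 2) * Real.Gamma ((k : ℝ) + 1 + α / 2)))
      (Set.Ioo (-1 : ℝ) 0.8) := by
  induction k, hk using Nat.le_induction with
  | base => simpa using base_anti
  | succ k hk ih =>
    intro x hx y hy hxy
    obtain ⟨hx1, hx2⟩ := hx
    obtain ⟨hy1, hy2⟩ := hy
    have hkx : (0:ℝ) < (k:ℝ) + 1 + x/2 := by
      have : (1:ℝ) ≤ (k:ℝ) := by exact_mod_cast hk
      linarith
    have hky : (0:ℝ) < (k:ℝ) + 1 + y/2 := by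
      have : (1:ℝ) ≤ (k:ℝ) := by exact_mod_cast hk
      linarith
    have hrec : ∀ t : ℝ, (0:ℝ) < (k:ℝ) + 1 + t/2 →
        Real.Gamma ((↑(k+1):ℝ) + 1 + t/2)
          = ((k:ℝ) + 1 + t/2) * Real.Gamma ((k:ℝ) + 1 + t/2) := by
      intro t ht
      rw [show ((↑(k+1):ℝ) + 1 + t/2) = ((k:ℝ) + 1 + t/2) + 1 by push_cast; ring]
      exact Real.Gamma_add_one ht.ne'
    simp only [hrec x hkx, hrec y hky]
    have hih := ih ⟨hx1, hx2⟩ ⟨hy1, hy2⟩ hxy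
    simp only [] at hih
    have hΓ1y : 0 < Real.Gamma (1 + y) := Real.Gamma_pos_of_pos (by linarith)
    have hΓ2y : 0 < Real.Gamma (1 + y/2) := Real.Gamma_pos_of_pos (by linarith)
    have hΓ3y : 0 < Real.Gamma ((k:ℝ) + 1 + y/2) := Real.Gamma_pos_of_pos hky
    have hΓ2x : 0 < Real.Gamma (1 + x/2) := Real.Gamma_pos_of_pos (by linarith)
    have hΓ3x : 0 < Real.Gamma ((k:ℝ) + 1 + x/2) := Real.Gamma_pos_of_pos hkx
    have hfy : 0 < Real.Gamma (1 + y) / (Real.Gamma (1 + y/2) * Real.Gamma ((k:ℝ) + 1 + y/2)) :=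
      div_pos hΓ1y (mul_pos hΓ2y hΓ3y)
    have e1 : Real.Gamma (1 + y) / (Real.Gamma (1 + y/2) * (((k:ℝ) + 1 + y/2) * Real.Gamma ((k:ℝ) + 1 + y/2)))
        = (Real.Gamma (1 + y) / (Real.Gamma (1 + y/2) * Real.Gamma ((k:ℝ) + 1 + y/2))) / ((k:ℝ) + 1 + y/2) := by
      rw [div_div]
      ring_nf
    have e2 : Real.Gamma (1 + x) / (Real.Gamma (1 + x/2) * (((k:ℝ) + 1 + x/2) * Real.Gamma ((k:ℝ) + 1 + x/2)))
        = (Real.Gamma (1 + x) / (Real.Gamma (1 + x/2) * Real.Gamma ((k:ℝ) + 1 + x/2))) / ((k:ℝ) + 1 + x/2) := by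
      rw [div_div]
      ring_nf
    rw [e1, e2, div_lt_div_iff₀ hky hkx]
    have hxy2 : (k:ℝ) + 1 + x/2 ≤ (k:ℝ) + 1 + y/2 := by linarith
    nlinarith [hih, hfy, hkx]
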